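/- There exist a constant C > 0 and m₀ ∈ ℕ such that for every m ≥ m₀ and n = ±(2m+1): the function α_n(z) = ∑_{ν=1}^∞ τ_ν(n,z) is complex-differentiable on the open disc |z| < 1/2, and its derivative satisfies |α_n'(z)| ≤ C/m² for all z with |z| ≤ 1/4. -/

import Mathlib

open Finset

noncomputable section

/-- Coefficient function `p`: `p(2) = A`, `p(-2) = a`. -/
def pc (a A : ℂ) (w : ℤ) : ℂ := if w = 2 then A else if w = -2 then a else 0

/-- Coefficient function `q`: `q(2) = B`, `q(-2) = b`. -/
def qc (b B : ℂ) (w : ℤ) : ℂ := if w = 2 then B else if w = -2 then b else 0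

/-- Vertex `j_k = -n + x_1 + ⋯ + x_k` of a walk `x` starting at `-n`. -/
def vtx (n : ℤ) (x : List ℤ) (k : ℕ) : ℤ := -n + (x.take k).sum

/-- An admissible walk from `-n` to `n`: odd length, steps in `{-2, 2}`, total sum `2n`,
and the vertices `j_k` (for `1 ≤ k < length`) satisfy `j_k ≠ n` for odd `k` and
`j_k ≠ -n` for even `k`. -/
def AdmX (n : ℤ) (x : List ℤ) : Prop :=
  Odd x.length ∧ (∀ s ∈ x, s = 2 ∨ s = -2) ∧ x.sum = 2 * n ∧
    ∀ k : ℕ, 1 ≤ k → k < x.length →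
      (Odd k → vtx n x k ≠ n) ∧ (Even k → vtx n x k ≠ -n)

/-- `X_n(r)`: admissible walks from `-n` to `n` with exactly `r` negative steps if `n > 0`,
resp. exactly `r` positive steps if `n < 0`. -/
def Xw (n : ℤ) (r : ℕ) : Set (List ℤ) :=
  {x | AdmX n x ∧ (0 < n → x.count (-2) = r) ∧ (n < 0 → x.count 2 = r)}

/-- Numerator of `h⁺`: `q(x_1) p(x_2) q(x_3) ⋯ p(x_{2ν}) q(x_{2ν+1})`. -/
def numX (a A b B : ℂ) (x : List ℤ) : ℂ :=
  ∏ t ∈ Finset.range x.length,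
    (if t % 2 = 0 then qc b B (x.getD t 0) else pc a A (x.getD t 0))

/-- Denominator of `h⁺`: the product of the factors `(n - j_k + z)` for odd `k` and
`(n + j_k + z)` for even `k`, `1 ≤ k ≤ 2ν`. -/
def denX (n : ℤ) (x : List ℤ) (z : ℂ) : ℂ :=
  ∏ k ∈ Finset.Icc 1 (x.length - 1),
    (if k % 2 = 1 then ((n : ℂ) - (vtx n x k : ℂ) + z) else ((n : ℂ) + (vtx n x k : ℂ) + z))

/-- `h⁺(x, z)`. -/
def hX (a A b B : ℂ) (n : ℤ) (x : List ℤ) (z : ℂ) : ℂ := numX a A b B x / denX n x z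

/-- `σ⁺_r(n, z) = ∑_{x ∈ X_n(r)} h⁺(x, z)`. -/
def sigmaX (a A b B : ℂ) (n : ℤ) (r : ℕ) (z : ℂ) : ℂ :=
  ∑' x : Xw n r, hX a A b B n (x : List ℤ) z

/-- `β⁺_n(z) = ∑_{r=0}^∞ σ⁺_r(n, z)`. -/
def betaX (a A b B : ℂ) (n : ℤ) (z : ℂ) : ℂ := ∑' r : ℕ, sigmaX a A b B n r z

/-- Vertex `j_k = n + w_1 + ⋯ + w_k` of a walk `w` starting at `n`. -/
def vtxW (n : ℤ) (w : List ℤ) (k : ℕ) : ℤ := n + (w.take k).sum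

/-- An admissible walk from `n` to `n` of length `2ν`: steps in `{-2, 2}`, total sum `0`,
and the vertices `j_k` (for `1 ≤ k ≤ 2ν - 1`) satisfy `j_k ≠ -n` for odd `k` and
`j_k ≠ n` for even `k`. -/
def AdmW (n : ℤ) (ν : ℕ) (w : List ℤ) : Prop :=
  w.length = 2 * ν ∧ (∀ s ∈ w, s = 2 ∨ s = -2) ∧ w.sum = 0 ∧
    ∀ k : ℕ, 1 ≤ k → k < w.length →
      (Odd k → vtxW n w k ≠ -n) ∧ (Even k → vtxW n w k ≠ n)

/-- `W_n(ν)`: admissible walks from `n` to `n` with `2ν` steps. -/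
def Ww (n : ℤ) (ν : ℕ) : Set (List ℤ) := {w | AdmW n ν w}

/-- Numerator of `h`: `p(w_1) q(w_2) ⋯ p(w_{2ν-1}) q(w_{2ν})`. -/
def numW (a A b B : ℂ) (w : List ℤ) : ℂ :=
  ∏ t ∈ Finset.range w.length,
    (if t % 2 = 0 then pc a A (w.getD t 0) else qc b B (w.getD t 0))

/-- Denominator of `h`: the product of the factors `(n + j_k + z)` for odd `k` and
`(n - j_k + z)` for even `k`, `1 ≤ k ≤ 2ν - 1`. -/
def denW (n : ℤ) (w : List ℤ) (z : ℂ) : ℂ :=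
  ∏ k ∈ Finset.Icc 1 (w.length - 1),
    (if k % 2 = 1 then ((n : ℂ) + (vtxW n w k : ℂ) + z) else ((n : ℂ) - (vtxW n w k : ℂ) + z))

/-- `h(w, z)`. -/
def hW (a A b B : ℂ) (n : ℤ) (w : List ℤ) (z : ℂ) : ℂ := numW a A b B w / denW n w z

/-- `τ_ν(n, z) = ∑_{w ∈ W_n(ν)} h(w, z)`. -/
def tauW (a A b B : ℂ) (n : ℤ) (ν : ℕ) (z : ℂ) : ℂ :=
  ∑' w : Ww n ν, hW a A b B n (w : List ℤ) z

/-- `α_n(z) = ∑_{ν=1}^∞ τ_ν(n, z)`. -/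
def alphaW (a A b B : ℂ) (n : ℤ) (z : ℂ) : ℂ := ∑' ν : ℕ, tauW a A b B n (ν + 1) z


def Lset : ℕ → Finset (List ℤ)
  | 0 => {[]}
  | (N+1) => (Lset N).image (List.cons 2) ∪ (Lset N).image (List.cons (-2))

lemma Lset_card (N : ℕ) : (Lset N).card ≤ 2 ^ N := by
  induction N with
  | zero => simp [Lset]
  | succ N ih =>
    refine le_trans (Finset.card_union_le _ _) ?_
    have h1 := Finset.card_image_le (s := Lset N) (f := List.cons 2)
    have h2 := Finset.card_image_le (s := Lset N) (f := List.cons (-2))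
    calc _ ≤ 2^N + 2^N := by omega
    _ = 2^(N+1) := by ring

lemma mem_Lset : ∀ (N : ℕ) (w : List ℤ), w.length = N → (∀ s ∈ w, s = 2 ∨ s = -2) → w ∈ Lset N := by
  intro N
  induction N with
  | zero => intro w h _; simp [List.length_eq_zero_iff.1 h, Lset]
  | succ N ih =>
    intro w hlen hs
    match w with
    | s :: t =>
      have ht : t ∈ Lset N := ih t (by simpa using hlen) (fun x hx => hs x (List.mem_cons_of_mem _ hx))
      rcases hs s List.mem_cons_self with rfl | rfl
      · exact Finset.mem_union_left _ (Finset.mem_image_of_mem _ ht)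
      · exact Finset.mem_union_right _ (Finset.mem_image_of_mem _ ht)

def dInt (n : ℤ) (w : List ℤ) (k : ℕ) : ℤ :=
  if k % 2 = 1 then 2*n + (w.take k).sum else -((w.take k).sum)

lemma denW_eq (n : ℤ) (w : List ℤ) (z : ℂ) :
    denW n w z = ∏ k ∈ Finset.Icc 1 (w.length - 1), (((dInt n w k : ℤ) : ℂ) + z) := by
  unfold denW dInt vtxW
  refine Finset.prod_congr rfl fun k _ => ?_
  split_ifs <;> push_cast <;> ring

lemma norm_ge_of_abs (d : ℤ) (r : ℝ) (hd : r ≤ |(d:ℝ)|) (z : ℂ) (hz : ‖z‖ ≤ 1/2) :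
    r - 1/2 ≤ ‖(d:ℂ) + z‖ := by
  have h1 : ‖(d:ℂ)‖ = |(d:ℝ)| := by
    rw [show ((d:ℂ)) = (((d:ℝ)):ℂ) by push_cast; ring, Complex.norm_real, Real.norm_eq_abs]
  have h := norm_add_le ((d:ℂ) + z) (-z)
  rw [add_neg_cancel_right, norm_neg, h1] at h
  linarith

lemma walk_facts {n : ℤ} {m ν : ℕ} (hm : 1 ≤ m)
    (hn : n = 2*(m:ℤ)+1 ∨ n = -(2*(m:ℤ)+1)) (hν : 1 ≤ ν)
    {w : List ℤ} (hw : AdmW n ν w) {z : ℂ} (hz : ‖z‖ ≤ 1/2) :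
    (∀ k, 1 ≤ k → k < 2*ν → (3/2:ℝ) ≤ ‖((dInt n w k : ℤ):ℂ) + z‖) ∧
    (∀ i, i+1 < ν → (m:ℝ) ≤ ‖((dInt n w (2*i+1) : ℤ):ℂ) + z‖ * ‖((dInt n w (2*i+2) : ℤ):ℂ) + z‖) ∧
    ((3*(m:ℝ)) ≤ ‖((dInt n w (2*ν-1) : ℤ):ℂ) + z‖) := by
  obtain ⟨hlen, hsteps, hsum, hadm⟩ := hw
  set s : ℕ → ℤ := fun k => (w.take k).sum with hsdef
  have evsum : ∀ l : List ℤ, (∀ x ∈ l, Even x) → Even l.sum := by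
    intro l; induction l with
    | nil => simp
    | cons x t ih =>
      intro h; rw [List.sum_cons]
      exact (h x List.mem_cons_self).add (ih fun y hy => h y (List.mem_cons_of_mem _ hy))
  have heven : ∀ k, Even (s k) := by
    intro k
    refine evsum _ fun x hx => ?_
    rcases hsteps x (List.take_subset _ _ hx) with rfl | rfl <;> decide
  have hstep : ∀ k, k < w.length → s (k+1) = s k + 2 ∨ s (k+1) = s k - 2 := by
    intro k hk
    have h := List.sum_take_succ w k hk
    rcases hsteps (w[k]) (List.getElem_mem hk) with h2 | h2
    · left; rw [hsdef]; simp only; rw [h, h2]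
    · right; rw [hsdef]; simp only; rw [h, h2]; ring
  have hsfull : s (2*ν) = 0 := by
    rw [hsdef]; simp only [← hlen, List.take_length]; exact hsum
  have habs2n : |(2*n : ℤ)| = 4*(m:ℤ)+2 := by
    rcases hn with rfl | rfl
    · rw [abs_of_nonneg (by positivity)]; ring
    · rw [abs_of_nonpos (by nlinarith [Int.natCast_nonneg m])]; ring
  have hodd : ∀ k, 1 ≤ k → k < 2*ν → k % 2 = 1 → 2*n + s k ≠ 0 := by
    intro k h1 h2 h3 heq
    have h4 := (hadm k h1 (by omega)).1 (Nat.odd_iff.2 h3)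
    apply h4; unfold vtxW; simp only [hsdef] at heq; omega
  have heven' : ∀ k, 1 ≤ k → k < 2*ν → k % 2 = 0 → s k ≠ 0 := by
    intro k h1 h2 h3 heq
    have h4 := (hadm k h1 (by omega)).2 (Nat.even_iff.2 h3)
    apply h4; unfold vtxW; simp only [hsdef] at heq; omega
  have hd1 : ∀ k, k % 2 = 1 → dInt n w k = 2*n + s k := fun k h => if_pos h
  have hd0 : ∀ k, k % 2 = 0 → dInt n w k = -(s k) := fun k h => if_neg (by omega)
  have key1 : ∀ k, 1 ≤ k → k < 2*ν → (3/2:ℝ) ≤ ‖((dInt n w k : ℤ):ℂ) + z‖ := by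
    intro k h1 h2
    have hd : dInt n w k ≠ 0 ∧ Even (dInt n w k) := by
      rcases Nat.even_or_odd k with he | ho
      · rw [hd0 k (Nat.even_iff.1 he)]
        exact ⟨neg_ne_zero.2 (heven' k h1 h2 (Nat.even_iff.1 he)), (heven k).neg⟩
      · rw [hd1 k (Nat.odd_iff.1 ho)]
        exact ⟨hodd k h1 h2 (Nat.odd_iff.1 ho), (even_two_mul n).add (heven k)⟩
    have habs : (2:ℝ) ≤ |((dInt n w k : ℤ):ℝ)| := by
      have h3 : (2:ℤ) ≤ |dInt n w k| := by
        rcases hd.2 with ⟨c, hc⟩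
        have h4 : (1:ℤ) ≤ |c| := Int.one_le_abs (by omega)
        have h5 : |dInt n w k| = 2 * |c| := by
          rw [hc, show c + c = 2 * c by ring, abs_mul]; norm_num
        omega
      exact_mod_cast h3
    have := norm_ge_of_abs _ 2 habs z hz; linarith
  refine ⟨key1, ?_, ?_⟩
  · intro i hi
    have hk1 : (2*i+1) % 2 = 1 := by omega
    have hk2 : (2*i+2) % 2 = 0 := by omega
    rw [hd1 _ hk1, hd0 _ hk2]
    rcases le_or_gt ((m:ℤ)+1) |2*n + s (2*i+1)| with hbig | hsmall
    · have h1 := norm_ge_of_abs (2*n + s (2*i+1)) ((m:ℝ)+1) (by exact_mod_cast hbig) z hz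
      have h2 : (3/2:ℝ) ≤ ‖((-(s (2*i+2)) : ℤ):ℂ) + z‖ := by
        rw [← hd0 _ hk2]; exact key1 _ (by omega) (by omega)
      have h0 : (0:ℝ) ≤ (m:ℝ) := Nat.cast_nonneg m
      nlinarith
    · have hsm : |2*n + s (2*i+1)| ≤ (m:ℤ) := by omega
      have hA : 3*(m:ℤ)+2 ≤ |s (2*i+1)| := by
        have h := abs_sub_abs_le_abs_sub (2*n) (2*n + s (2*i+1))
        rw [habs2n, show 2*n - (2*n + s (2*i+1)) = -(s (2*i+1)) by ring, abs_neg] at h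
        omega
      have hB : 3*(m:ℤ) ≤ |s (2*i+2)| := by
        have h := abs_sub_abs_le_abs_sub (s (2*i+1)) (s (2*i+2))
        have h2 : |s (2*i+1) - s (2*i+2)| = 2 := by
          rcases hstep (2*i+1) (by omega) with h' | h' <;>
            rw [show 2*i+2 = (2*i+1)+1 from rfl, h'] <;> simp
        omega
      have h2 := norm_ge_of_abs (-(s (2*i+2))) (3*(m:ℝ))
        (by push_cast [abs_neg]; exact_mod_cast hB) z hz
      have h1 : (3/2:ℝ) ≤ ‖((2*n + s (2*i+1) : ℤ):ℂ) + z‖ := by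
        rw [← hd1 _ hk1]; exact key1 _ (by omega) (by omega)
      have h0 : (1:ℝ) ≤ (m:ℝ) := by exact_mod_cast hm
      nlinarith
  · have hk : (2*ν-1) % 2 = 1 := by omega
    rw [hd1 _ hk]
    have hs2 : s (2*ν-1) = 2 ∨ s (2*ν-1) = -2 := by
      rcases hstep (2*ν-1) (by omega) with h' | h' <;>
        rw [show 2*ν-1+1 = 2*ν by omega] at h' <;> omega
    have habs : 4*(m:ℤ) ≤ |2*n + s (2*ν-1)| := by
      have h := abs_sub_abs_le_abs_sub (2*n) (-(s (2*ν-1)))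
      rw [habs2n, abs_neg, show 2*n - -(s (2*ν-1)) = 2*n + s (2*ν-1) by ring] at h
      rcases hs2 with h2 | h2 <;> rw [h2] at h ⊢ <;> norm_num at h ⊢ <;> omega
    have h1 := norm_ge_of_abs (2*n + s (2*ν-1)) (4*(m:ℝ)) (by exact_mod_cast habs) z hz
    have h0 : (1:ℝ) ≤ (m:ℝ) := by exact_mod_cast hm
    linarith

lemma prod_pair_bound (g : ℕ → ℝ) (hg0 : ∀ k, 0 ≤ g k) (c : ℝ) (hc : 0 ≤ c) :
    ∀ N : ℕ, (∀ i, i < N → c ≤ g (2*i+1) * g (2*i+2)) →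
      c^N ≤ ∏ k ∈ Finset.Icc 1 (2*N), g k := by
  intro N
  induction N with
  | zero => simp
  | succ N ih =>
    intro hp
    rw [show 2*(N+1) = (2*N+1)+1 by ring, Finset.prod_Icc_succ_top (by omega),
      Finset.prod_Icc_succ_top (by omega), pow_succ]
    calc c^N * c ≤ (∏ k ∈ Finset.Icc 1 (2*N), g k) * (g (2*N+1) * g (2*N+2)) :=
          mul_le_mul (ih fun i hi => hp i (by omega)) (hp N (by omega)) hc
            (Finset.prod_nonneg fun k _ => hg0 k)
      _ = _ := by rw [show 2*N+1+1 = 2*N+2 by ring]; ring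

lemma den_facts {n : ℤ} {m ν : ℕ} (hm : 1 ≤ m)
    (hn : n = 2*(m:ℤ)+1 ∨ n = -(2*(m:ℤ)+1)) (hν : 1 ≤ ν)
    {w : List ℤ} (hw : AdmW n ν w) {z : ℂ} (hz : ‖z‖ ≤ 1/2) :
    3*(m:ℝ)^ν ≤ ∏ k ∈ Finset.Icc 1 (2*ν-1), ‖((dInt n w k : ℤ):ℂ) + z‖ ∧
    ∀ k ∈ Finset.Icc 1 (2*ν-1), (if ν = 1 then 9*(m:ℝ)^2 else (9/2)*(m:ℝ)^ν) ≤
      ‖((dInt n w k : ℤ):ℂ) + z‖ * ∏ j ∈ Finset.Icc 1 (2*ν-1), ‖((dInt n w j : ℤ):ℂ) + z‖ := by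
  obtain ⟨key1, key2, key3⟩ := walk_facts hm hn hν hw hz
  have hm' : (1:ℝ) ≤ (m:ℝ) := by exact_mod_cast hm
  obtain ⟨ν', rfl⟩ : ∃ ν', ν = ν'+1 := ⟨ν-1, by omega⟩
  have hsplit : ∏ k ∈ Finset.Icc 1 (2*(ν'+1)-1), ‖((dInt n w k : ℤ):ℂ) + z‖
      = (∏ k ∈ Finset.Icc 1 (2*ν'), ‖((dInt n w k : ℤ):ℂ) + z‖) * ‖((dInt n w (2*ν'+1) : ℤ):ℂ) + z‖ := by
    rw [show 2*(ν'+1)-1 = 2*ν'+1 by omega, Finset.prod_Icc_succ_top (by omega)]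
  have hpart : (m:ℝ)^ν' ≤ ∏ k ∈ Finset.Icc 1 (2*ν'), ‖((dInt n w k : ℤ):ℂ) + z‖ :=
    prod_pair_bound _ (fun k => norm_nonneg _) _ (Nat.cast_nonneg m) ν'
      (fun i hi => key2 i (by omega))
  have hlast : 3*(m:ℝ) ≤ ‖((dInt n w (2*ν'+1) : ℤ):ℂ) + z‖ := by
    have := key3; rwa [show 2*(ν'+1)-1 = 2*ν'+1 by omega] at this
  have hden : 3*(m:ℝ)^(ν'+1) ≤ ∏ k ∈ Finset.Icc 1 (2*(ν'+1)-1), ‖((dInt n w k : ℤ):ℂ) + z‖ := by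
    rw [hsplit]
    calc 3*(m:ℝ)^(ν'+1) = (m:ℝ)^ν' * (3*(m:ℝ)) := by ring
      _ ≤ _ := mul_le_mul hpart hlast (by positivity) (le_trans (by positivity) hpart)
  refine ⟨hden, fun k hk => ?_⟩
  simp only [Finset.mem_Icc] at hk
  split_ifs with h1
  · -- ν = 1 : k = 1 = 2*ν-1
    obtain rfl : ν' = 0 := by omega
    have hk1 : k = 1 := by omega
    subst hk1
    have h2 := hlast
    have h3 := hden
    simp only [show (2*(0+1)-1 : ℕ) = 1 by omega, show (2*0+1 : ℕ) = 1 by omega] at h2 h3 ⊢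
    calc 9*(m:ℝ)^2 = (3*(m:ℝ)) * (3*(m:ℝ)^(0+1)) := by ring
      _ ≤ _ := mul_le_mul h2 h3 (by positivity) (norm_nonneg _)
  · have hk2 : k < 2*(ν'+1) := by omega
    have h2 := key1 k hk.1 hk2
    calc (9/2)*(m:ℝ)^(ν'+1) = (3/2) * (3*(m:ℝ)^(ν'+1)) := by ring
      _ ≤ _ := mul_le_mul h2 hden (by positivity) (norm_nonneg _)

def Mbd (a A b B : ℂ) : ℝ := max 1 (max ‖a‖ (max ‖A‖ (max ‖b‖ ‖B‖)))

lemma Mbd_one (a A b B : ℂ) : 1 ≤ Mbd a A b B := le_max_left _ _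

lemma num_bound (a A b B : ℂ) {w : List ℤ} (hs : ∀ s ∈ w, s = 2 ∨ s = -2) :
    ‖numW a A b B w‖ ≤ (Mbd a A b B) ^ w.length := by
  rw [numW, norm_prod]
  calc ∏ t ∈ Finset.range w.length, ‖(if t % 2 = 0 then pc a A (w.getD t 0) else qc b B (w.getD t 0))‖
      ≤ ∏ t ∈ Finset.range w.length, Mbd a A b B := by
        refine Finset.prod_le_prod (fun t _ => norm_nonneg _) (fun t ht => ?_)
        have htl : t < w.length := Finset.mem_range.1 ht
        rw [List.getD_eq_getElem w 0 htl]
        rcases hs (w[t]) (List.getElem_mem htl) with h | h <;> rw [h] <;>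
          unfold pc qc <;> split_ifs <;>
          simp [Mbd, le_max_iff, le_refl, norm_nonneg]
    _ = (Mbd a A b B) ^ w.length := by rw [Finset.prod_const, Finset.card_range]

lemma hW_bounds {a A b B : ℂ} {n : ℤ} {m ν : ℕ} (hm : 1 ≤ m)
    (hn : n = 2*(m:ℤ)+1 ∨ n = -(2*(m:ℤ)+1)) (hν : 1 ≤ ν)
    {w : List ℤ} (hw : AdmW n ν w) {z : ℂ} (hz : ‖z‖ ≤ 1/2) :
    ‖hW a A b B n w z‖ ≤ (Mbd a A b B)^(2*ν) / (3*(m:ℝ)^ν) ∧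
    ∃ D : ℂ, HasDerivAt (hW a A b B n w) D z ∧
      ‖D‖ ≤ (Mbd a A b B)^(2*ν) * ((2*ν : ℕ) : ℝ) /
        (if ν = 1 then 9*(m:ℝ)^2 else (9/2)*(m:ℝ)^ν) := by
  obtain ⟨hden, hQ⟩ := den_facts hm hn hν hw hz
  have hm' : (1:ℝ) ≤ (m:ℝ) := by exact_mod_cast hm
  have hlen : w.length = 2*ν := hw.1
  set M := Mbd a A b B with hM
  set K := Finset.Icc 1 (2*ν-1) with hK
  set num := numW a A b B w with hnum
  set P : ℂ → ℂ := fun y => ∏ k ∈ K, (((dInt n w k : ℤ):ℂ) + y) with hP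
  have hfun : hW a A b B n w = fun y => num / P y := by
    funext y; rw [hW, denW_eq, hlen]
  have hPnorm : ∀ y : ℂ, ‖P y‖ = ∏ k ∈ K, ‖((dInt n w k : ℤ):ℂ) + y‖ := fun y => norm_prod _ _
  have hmν : (0:ℝ) < 3*(m:ℝ)^ν := by positivity
  have hPz : 3*(m:ℝ)^ν ≤ ‖P z‖ := by rw [hPnorm]; exact hden
  have hPzpos : 0 < ‖P z‖ := lt_of_lt_of_le hmν hPz
  have hP0 : P z ≠ 0 := by
    intro h; rw [h, norm_zero] at hPzpos; exact lt_irrefl 0 hPzpos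
  have hnumb : ‖num‖ ≤ M^(2*ν) := by
    rw [hnum, ← hlen]; exact num_bound a A b B hw.2.1
  constructor
  · rw [hfun]
    simp only
    rw [norm_div]
    exact div_le_div₀ (pow_nonneg (le_trans zero_le_one (Mbd_one a A b B)) _) hnumb hmν hPz
  · have hS : HasDerivAt P (∑ k ∈ K, ∏ j ∈ K.erase k, (((dInt n w j : ℤ):ℂ) + z)) z := by
      have h := HasDerivAt.finset_prod (u := K) (f := fun k y => ((dInt n w k : ℤ):ℂ) + y)
        (f' := fun _ => 1) (x := z) (fun i _ => (hasDerivAt_id z).const_add _)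
      rw [hP]; simpa [Finset.prod_fn] using h
    have hdiv := (hasDerivAt_const z num).div hS hP0
    refine ⟨_, by rw [hfun]; exact hdiv, ?_⟩
    set Q : ℝ := if ν = 1 then 9*(m:ℝ)^2 else (9/2)*(m:ℝ)^ν with hQdef
    have hQpos : 0 < Q := by rw [hQdef]; split_ifs <;> positivity
    set S := ∑ k ∈ K, ∏ j ∈ K.erase k, (((dInt n w j : ℤ):ℂ) + z) with hSdef
    have hnorm : ‖(0 * P z - num * S) / P z ^ 2‖ = ‖num‖ * ‖S‖ / ‖P z‖^2 := by
      rw [norm_div, norm_pow, zero_mul, zero_sub, norm_neg, norm_mul]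
    rw [hnorm]
    have hterm : ∀ k ∈ K, ‖∏ j ∈ K.erase k, (((dInt n w j : ℤ):ℂ) + z)‖ ≤ ‖P z‖^2 / Q := by
      intro k hk
      have h1 : ‖∏ j ∈ K.erase k, (((dInt n w j : ℤ):ℂ) + z)‖ * ‖((dInt n w k : ℤ):ℂ) + z‖
          = ‖P z‖ := by
        rw [← norm_mul, Finset.prod_erase_mul K _ hk]
      have h2 : Q ≤ ‖((dInt n w k : ℤ):ℂ) + z‖ * ‖P z‖ := by
        rw [hPnorm]; exact hQ k hk
      rw [le_div_iff₀ hQpos]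
      have h3 := mul_le_mul_of_nonneg_left h2 (norm_nonneg (∏ j ∈ K.erase k, (((dInt n w j : ℤ):ℂ) + z)))
      calc ‖∏ j ∈ K.erase k, (((dInt n w j : ℤ):ℂ) + z)‖ * Q
          ≤ ‖∏ j ∈ K.erase k, (((dInt n w j : ℤ):ℂ) + z)‖ * (‖((dInt n w k : ℤ):ℂ) + z‖ * ‖P z‖) := h3
        _ = ‖P z‖^2 := by rw [← mul_assoc, h1]; ring
    have hsum : ‖S‖ ≤ ((2*ν : ℕ):ℝ) * (‖P z‖^2 / Q) := by
      refine le_trans (norm_sum_le _ _) ?_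
      calc ∑ k ∈ K, ‖∏ j ∈ K.erase k, (((dInt n w j : ℤ):ℂ) + z)‖
          ≤ ∑ _k ∈ K, (‖P z‖^2/Q) := Finset.sum_le_sum hterm
        _ = (K.card : ℝ) * (‖P z‖^2/Q) := by rw [Finset.sum_const, nsmul_eq_mul]
        _ ≤ ((2*ν : ℕ):ℝ) * (‖P z‖^2/Q) := by
            have hc : K.card ≤ 2*ν := by rw [hK, Nat.card_Icc]; omega
            exact mul_le_mul_of_nonneg_right (by exact_mod_cast hc) (by positivity)
    calc ‖num‖ * ‖S‖ / ‖P z‖^2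
        ≤ M^(2*ν) * (((2*ν : ℕ):ℝ) * (‖P z‖^2 / Q)) / ‖P z‖^2 := by
          refine (div_le_div_iff_of_pos_right (by positivity)).2 ?_
          exact mul_le_mul hnumb hsum (norm_nonneg _) (le_trans (norm_nonneg _) hnumb)
      _ = M^(2*ν) * ((2*ν : ℕ):ℝ) / Q := by
          rw [div_eq_iff (pow_ne_zero 2 hPzpos.ne')]
          field_simp [hQpos.ne']

def TW (n : ℤ) (ν : ℕ) : Finset (List ℤ) :=
  @Finset.filter _ (fun w => AdmW n ν w) (Classical.decPred _) (Lset (2*ν))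

lemma mem_TW (n : ℤ) (ν : ℕ) (w : List ℤ) : w ∈ TW n ν ↔ AdmW n ν w := by
  constructor
  · intro h
    exact ((@Finset.mem_filter _ _ (Classical.decPred _) (Lset (2*ν)) w).1 h).2
  · intro h
    exact (@Finset.mem_filter _ _ (Classical.decPred _) (Lset (2*ν)) w).2
      ⟨mem_Lset _ w h.1 h.2.1, h⟩

lemma tauW_eq_sum (a A b B : ℂ) (n : ℤ) (ν : ℕ) (z : ℂ) :
    tauW a A b B n ν z = ∑ w ∈ TW n ν, hW a A b B n w z := by
  classical
  have hsub := _root_.tsum_subtype (Ww n ν) (fun w => hW a A b B n w z)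
  have h0 : ∀ w ∉ TW n ν, (Ww n ν).indicator (fun w => hW a A b B n w z) w = 0 := by
    intro w hw
    apply Set.indicator_of_notMem
    intro hmem
    exact hw ((mem_TW n ν w).2 hmem)
  rw [tauW, hsub, tsum_eq_sum h0]
  refine Finset.sum_congr rfl fun w hw => ?_
  have hmemw : w ∈ Ww n ν := (mem_TW n ν w).1 hw
  exact Set.indicator_of_mem (s := Ww n ν) hmemw (fun v => hW a A b B n v z)

lemma TW_card (n : ℤ) (ν : ℕ) : ((TW n ν).card : ℝ) ≤ 4^ν := by
  have h1 : (TW n ν).card ≤ (Lset (2*ν)).card :=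
    Finset.card_le_card (fun w hw => (@Finset.mem_filter _ _ (Classical.decPred _) _ _).1 hw |>.1)
  have h2 := Lset_card (2*ν)
  have h3 : (2:ℕ)^(2*ν) = 4^ν := by rw [pow_mul]; norm_num
  have : (TW n ν).card ≤ 4^ν := by omega
  exact_mod_cast this

lemma two_mul_le_two_pow : ∀ ν : ℕ, 1 ≤ ν → (2*ν : ℕ) ≤ 2^ν := by
  intro ν
  induction ν with
  | zero => omega
  | succ ν ih =>
    intro _
    rcases Nat.eq_zero_or_pos ν with rfl | hν
    · norm_num
    · have h1 := ih hν
      have h2 : 2 ≤ 2^ν := by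
        calc 2 = 2^1 := rfl
        _ ≤ 2^ν := Nat.pow_le_pow_right (by norm_num) hν
      rw [pow_succ]; omega

lemma tau_bounds {a A b B : ℂ} {n : ℤ} {m ν : ℕ} (hm : 1 ≤ m)
    (hn : n = 2*(m:ℤ)+1 ∨ n = -(2*(m:ℤ)+1)) (hν : 1 ≤ ν) {z : ℂ} (hz : ‖z‖ ≤ 1/2) :
    ‖tauW a A b B n ν z‖ ≤ (4*(Mbd a A b B)^2 / m)^ν ∧
    ∃ D : ℂ, HasDerivAt (tauW a A b B n ν) D z ∧
      ‖D‖ ≤ (if ν = 1 then (Mbd a A b B)^2/(m:ℝ)^2 else (8*(Mbd a A b B)^2/m)^ν) := by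
  have hm' : (1:ℝ) ≤ (m:ℝ) := by exact_mod_cast hm
  have hmpos : (0:ℝ) < (m:ℝ) := by linarith
  set M := Mbd a A b B with hM
  have hM1 : (1:ℝ) ≤ M := Mbd_one a A b B
  have hM0 : (0:ℝ) ≤ M := by linarith
  have htau : tauW a A b B n ν = fun y => ∑ w ∈ TW n ν, hW a A b B n w y :=
    funext fun y => tauW_eq_sum a A b B n ν y
  have hadm : ∀ w ∈ TW n ν, AdmW n ν w := fun w hw => (mem_TW n ν w).1 hw
  have hval : ∀ w ∈ TW n ν, ∀ y : ℂ, ‖y‖ ≤ 1/2 → ‖hW a A b B n w y‖ ≤ M^(2*ν) / (3*(m:ℝ)^ν) :=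
    fun w hw y hy => (hW_bounds hm hn hν (hadm w hw) hy).1
  have hcard := TW_card n ν
  constructor
  · rw [htau]
    refine le_trans (norm_sum_le _ _) ?_
    calc ∑ w ∈ TW n ν, ‖hW a A b B n w z‖ ≤ ∑ _w ∈ TW n ν, (M^(2*ν) / (3*(m:ℝ)^ν)) :=
          Finset.sum_le_sum fun w hw => hval w hw z hz
      _ = ((TW n ν).card : ℝ) * (M^(2*ν) / (3*(m:ℝ)^ν)) := by
          rw [Finset.sum_const, nsmul_eq_mul]
      _ ≤ 4^ν * (M^(2*ν) / (3*(m:ℝ)^ν)) :=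
          mul_le_mul_of_nonneg_right hcard (by positivity)
      _ ≤ (4*M^2/(m:ℝ))^ν := by
          rw [div_pow, mul_pow, ← pow_mul]
          rw [mul_div_assoc]
          refine mul_le_mul_of_nonneg_left ?_ (by positivity)
          refine div_le_div_of_nonneg_left (by positivity) (by positivity) ?_
          nlinarith [pow_pos hmpos ν]
  · have hex : ∀ w ∈ TW n ν, ∃ D : ℂ, HasDerivAt (hW a A b B n w) D z ∧
        ‖D‖ ≤ M^(2*ν) * ((2*ν : ℕ) : ℝ) / (if ν = 1 then 9*(m:ℝ)^2 else (9/2)*(m:ℝ)^ν) :=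
      fun w hw => (hW_bounds hm hn hν (hadm w hw) hz).2
    choose! D hD1 hD2 using hex
    refine ⟨∑ w ∈ TW n ν, D w, ?_, ?_⟩
    · rw [htau]; exact HasDerivAt.fun_sum fun w hw => hD1 w hw
    · refine le_trans (norm_sum_le _ _) ?_
      set Q : ℝ := if ν = 1 then 9*(m:ℝ)^2 else (9/2)*(m:ℝ)^ν with hQdef
      have hQpos : 0 < Q := by rw [hQdef]; split_ifs <;> positivity
      calc ∑ w ∈ TW n ν, ‖D w‖ ≤ ∑ _w ∈ TW n ν, (M^(2*ν) * ((2*ν : ℕ) : ℝ) / Q) :=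
            Finset.sum_le_sum fun w hw => hD2 w hw
        _ = ((TW n ν).card : ℝ) * (M^(2*ν) * ((2*ν : ℕ) : ℝ) / Q) := by
            rw [Finset.sum_const, nsmul_eq_mul]
        _ ≤ 4^ν * (M^(2*ν) * ((2*ν : ℕ) : ℝ) / Q) :=
            mul_le_mul_of_nonneg_right hcard (by positivity)
        _ ≤ _ := by
            split_ifs with h1
            · subst h1
              rw [hQdef, if_pos rfl]
              have ht : (0:ℝ) ≤ M^2/(m:ℝ)^2 := by positivity
              have heq : (4:ℝ)^1 * (M^(2*1) * (((2*1:ℕ)):ℝ)/(9*(m:ℝ)^2))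
                  = (8/9)*(M^2/(m:ℝ)^2) := by
                push_cast
                field_simp
                ring
              rw [heq]
              linarith
            · -- ν ≥ 2 case (ν ≠ 1, ν ≥ 1)
              rw [hQdef, if_neg h1]
              have h2ν : ((2*ν : ℕ) : ℝ) ≤ 2^ν := by exact_mod_cast two_mul_le_two_pow ν hν
              have hmν : (0:ℝ) < (m:ℝ)^ν := pow_pos hmpos ν
              have hrhs : (8*M^2/(m:ℝ))^ν = (8^ν * M^(2*ν)) / (m:ℝ)^ν := by
                rw [div_pow, mul_pow, ← pow_mul]
              have hL : (4:ℝ)^ν * (M^(2*ν) * ((2*ν:ℕ):ℝ) / ((9/2)*(m:ℝ)^ν))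
                  = (4^ν * M^(2*ν) * ((2*ν:ℕ):ℝ) * (2/9)) / (m:ℝ)^ν := by
                field_simp
              rw [hrhs, hL, div_le_div_iff₀ hmν hmν]
              have hnn : (0:ℝ) ≤ 4^ν * M^(2*ν) :=
                mul_nonneg (by positivity) (pow_nonneg hM0 _)
              have h1' : ((2*ν:ℕ):ℝ) * (2/9) ≤ 2^ν := by
                have : (0:ℝ) ≤ ((2*ν:ℕ):ℝ) := Nat.cast_nonneg _
                nlinarith
              have hkey : 4^ν * M^(2*ν) * ((2*ν:ℕ):ℝ) * (2/9) ≤ 4^ν * M^(2*ν) * 2^ν := by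
                calc 4^ν * M^(2*ν) * ((2*ν:ℕ):ℝ) * (2/9)
                    = (4^ν * M^(2*ν)) * (((2*ν:ℕ):ℝ) * (2/9)) := by ring
                  _ ≤ (4^ν * M^(2*ν)) * 2^ν := mul_le_mul_of_nonneg_left h1' hnn
                  _ = 4^ν * M^(2*ν) * 2^ν := by ring
              have h8 : (8:ℝ)^ν = 4^ν * 2^ν := by rw [← mul_pow]; norm_num
              calc 4^ν * M^(2*ν) * ((2*ν:ℕ):ℝ) * (2/9) * (m:ℝ)^ν
                  ≤ 4^ν * M^(2*ν) * 2^ν * (m:ℝ)^ν :=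
                    mul_le_mul_of_nonneg_right hkey (le_of_lt hmν)
                _ = 8^ν * M^(2*ν) * (m:ℝ)^ν := by rw [h8]; ring

/-- There exist `C > 0` and `m₀` such that for every `m ≥ m₀` and `n = ±(2m+1)`, the
function `α_n` is complex-differentiable on the open disc `|z| < 1/2` and its derivative
satisfies `|α_n'(z)| ≤ C/m²` for all `|z| ≤ 1/4`. -/
theorem stmt7 (a A b B : ℂ) (ha : a ≠ 0) (hA : A ≠ 0) (hb : b ≠ 0) (hB : B ≠ 0) :
    ∃ C > (0 : ℝ), ∃ m₀ : ℕ, ∀ m : ℕ, m₀ ≤ m → ∀ n : ℤ,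
      (n = 2 * m + 1 ∨ n = -(2 * m + 1)) →
      (∀ z ∈ Metric.ball (0 : ℂ) (1 / 2), DifferentiableAt ℂ (alphaW a A b B n) z) ∧
      (∀ z : ℂ, ‖z‖ ≤ 1 / 4 → ‖deriv (alphaW a A b B n) z‖ ≤ C / (m : ℝ) ^ 2) := by
  set M := Mbd a A b B with hMdef
  have hM1 : (1:ℝ) ≤ M := Mbd_one a A b B
  have hM0 : (0:ℝ) < M := lt_of_lt_of_le one_pos hM1
  refine ⟨400*M^4, by positivity, ⌈32*M^2⌉₊ + 1, ?_⟩
  intro m hm n hn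
  have hmR : 32*M^2 ≤ (m:ℝ) := by
    have h1 : (32*M^2) ≤ (⌈32*M^2⌉₊ : ℝ) := Nat.le_ceil _
    have h2 : ((⌈32*M^2⌉₊ : ℕ) : ℝ) ≤ (m:ℝ) := by
      exact_mod_cast le_trans (Nat.le_succ _) hm
    linarith
  have hm' : (1:ℝ) ≤ (m:ℝ) := by nlinarith
  have hm1 : 1 ≤ m := by exact_mod_cast hm'
  have hmpos : (0:ℝ) < (m:ℝ) := by linarith
  have hn' : n = 2*(m:ℤ)+1 ∨ n = -(2*(m:ℤ)+1) := hn
  have hball : ∀ y : ℂ, y ∈ Metric.ball (0:ℂ) (1/2) → ‖y‖ ≤ 1/2 := by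
    intro y hy
    rw [Metric.mem_ball, dist_zero_right] at hy
    linarith
  set u : ℕ → ℝ := fun ν => (8⁻¹:ℝ)^(ν+1) with hu
  have hgeo8 : Summable (fun i : ℕ => (8⁻¹:ℝ)^i) :=
    summable_geometric_of_lt_one (by norm_num) (by norm_num)
  have husum : Summable u := by
    refine Summable.of_nonneg_of_le (fun i => by positivity) (fun i => ?_) hgeo8
    exact pow_le_pow_of_le_one (by norm_num) (by norm_num) (by omega)
  have hratio0 : (0:ℝ) ≤ 4*M^2/(m:ℝ) := by positivity
  have hratio : 4*M^2/(m:ℝ) ≤ 8⁻¹ := by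
    rw [div_le_iff₀ hmpos]
    nlinarith
  have hFle : ∀ (i : ℕ) (y : ℂ), y ∈ Metric.ball (0:ℂ) (1/2) →
      ‖tauW a A b B n (i+1) y‖ ≤ u i := by
    intro i y hy
    refine le_trans (tau_bounds hm1 hn' (by omega) (hball y hy)).1 ?_
    exact pow_le_pow_left₀ hratio0 hratio (i+1)
  have hFdiff : ∀ i : ℕ, DifferentiableOn ℂ (tauW a A b B n (i+1)) (Metric.ball (0:ℂ) (1/2)) := by
    intro i y hy
    obtain ⟨D, hD, _⟩ := (tau_bounds hm1 hn' (by omega : 1 ≤ i+1) (hball y hy)).2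
    exact hD.differentiableAt.differentiableWithinAt
  have halpha : alphaW a A b B n = fun y => ∑' i : ℕ, tauW a A b B n (i+1) y := rfl
  have hdOn : DifferentiableOn ℂ (alphaW a A b B n) (Metric.ball (0:ℂ) (1/2)) := by
    rw [halpha]
    exact Complex.differentiableOn_tsum_of_summable_norm husum hFdiff Metric.isOpen_ball hFle
  constructor
  · intro z hz
    exact (hdOn z hz).differentiableAt (Metric.isOpen_ball.mem_nhds hz)
  · intro z hz
    have hzb : z ∈ Metric.ball (0:ℂ) (1/2) := by
      rw [Metric.mem_ball, dist_zero_right]; linarith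
    have hz2 : ‖z‖ ≤ 1/2 := by linarith
    have hHS : HasSum (fun i : ℕ => deriv (tauW a A b B n (i+1)) z)
        (deriv (fun y => ∑' i : ℕ, tauW a A b B n (i+1) y) z) :=
      Complex.hasSum_deriv_of_summable_norm husum hFdiff Metric.isOpen_ball hFle hzb
    set g : ℕ → ℝ := fun i => (256*M^4/(m:ℝ)^2) * (4⁻¹:ℝ)^i with hg
    have hgsum : Summable g :=
      (summable_geometric_of_lt_one (by norm_num) (by norm_num)).mul_left _
    have hder : ∀ i : ℕ, ‖deriv (tauW a A b B n (i+1)) z‖ ≤ g i := by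
      intro i
      obtain ⟨D, hD, hDb⟩ := (tau_bounds hm1 hn' (by omega : 1 ≤ i+1) hz2).2
      rw [hD.deriv]
      refine le_trans hDb ?_
      simp only [hg]
      rcases Nat.eq_zero_or_pos i with rfl | hi
      · rw [if_pos rfl]
        have h2 : (0:ℝ) < (m:ℝ)^2 := by positivity
        have h3 : M^2 ≤ 256*M^4 := by nlinarith [pow_le_pow_right₀ hM1 (by norm_num : 2 ≤ 4)]
        simp only [pow_zero, mul_one]
        exact div_le_div₀ (by positivity) h3 h2 (le_refl _)
      · have h1 : i + 1 ≠ 1 := by omega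
        rw [if_neg h1]
        have hρ0 : (0:ℝ) ≤ 8*M^2/(m:ℝ) := by positivity
        have hρ : 8*M^2/(m:ℝ) ≤ 4⁻¹ := by
          rw [div_le_iff₀ hmpos]; nlinarith
        obtain ⟨j, rfl⟩ : ∃ j, i = j+1 := ⟨i-1, by omega⟩
        have hsplit : (8*M^2/(m:ℝ))^(j+1+1) = (8*M^2/(m:ℝ))^2 * (8*M^2/(m:ℝ))^j := by ring
        rw [hsplit]
        have h2 : (8*M^2/(m:ℝ))^j ≤ (4⁻¹:ℝ)^j := pow_le_pow_left₀ hρ0 hρ j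
        have h3 : (8*M^2/(m:ℝ))^2 = 64*M^4/(m:ℝ)^2 := by
          field_simp; ring
        have h4 : (256*M^4/(m:ℝ)^2) * (4⁻¹:ℝ)^(j+1) = (64*M^4/(m:ℝ)^2) * (4⁻¹:ℝ)^j := by
          rw [pow_succ]; ring
        rw [h3, h4]
        exact mul_le_mul_of_nonneg_left h2 (by positivity)
    have hsummable : Summable (fun i : ℕ => ‖deriv (tauW a A b B n (i+1)) z‖) :=
      Summable.of_nonneg_of_le (fun i => norm_nonneg _) hder hgsum
    have heq : deriv (alphaW a A b B n) z = ∑' i : ℕ, deriv (tauW a A b B n (i+1)) z := by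
      rw [halpha]; exact hHS.tsum_eq.symm
    rw [heq]
    calc ‖∑' i, deriv (tauW a A b B n (i+1)) z‖
        ≤ ∑' i, ‖deriv (tauW a A b B n (i+1)) z‖ := norm_tsum_le_tsum_norm hsummable
      _ ≤ ∑' i, g i := Summable.tsum_le_tsum hder hsummable hgsum
      _ = (256*M^4/(m:ℝ)^2) * (1 - 4⁻¹)⁻¹ := by
          rw [hg, tsum_mul_left, tsum_geometric_of_lt_one (by norm_num) (by norm_num)]
      _ ≤ 400*M^4 / (m:ℝ)^2 := by
          rw [show ((1:ℝ) - 4⁻¹)⁻¹ = 4/3 by norm_num]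
          have h2 : (0:ℝ) < (m:ℝ)^2 := by positivity
          rw [div_mul_eq_mul_div, div_le_div_iff₀ h2 h2]
          have h4 : (0:ℝ) ≤ M^4 := by positivity
          nlinarith [mul_le_mul_of_nonneg_right (mul_le_mul_of_nonneg_right (le_refl (256:ℝ)) h4) (le_of_lt h2)]
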